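/- Let G and H be finite simple graphs, each with at least one edge, such that χ_v(G) = χ_v(H). If every optimal vector coloring of G × H is a convex combination of vector colorings induced by G and H, then the skeletons G^sk and H^sk are connected graphs. -/

import Mathlib

open Matrix Kronecker

noncomputable section VectorColoring

variable {V α β : Type*}

/-- A vector `t`-coloring of a graph `G`: vectors `p i` with `p i ⬝ᵥ p i = t - 1`
and `p i ⬝ᵥ p j ≤ -1` on edges. -/
def IsVecColoring [Fintype V] (G : SimpleGraph V) (t : ℝ) {d : ℕ}
    (p : V → Fin d → ℝ) : Prop :=
  (∀ i, p i ⬝ᵥ p i = t - 1) ∧ ∀ i j, G.Adj i j → p i ⬝ᵥ p j ≤ -1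

/-- The vector chromatic number: the least `t ≥ 1` admitting a vector `t`-coloring. -/
def vecChrom [Fintype V] (G : SimpleGraph V) : ℝ :=
  sInf {t : ℝ | 1 ≤ t ∧ ∃ (d : ℕ) (p : V → Fin d → ℝ), IsVecColoring G t p}

/-- A strict vector `t`-coloring: `p i ⬝ᵥ p j = -1` on edges. -/
def IsStrictVecColoring [Fintype V] (G : SimpleGraph V) (t : ℝ) {d : ℕ}
    (p : V → Fin d → ℝ) : Prop :=
  (∀ i, p i ⬝ᵥ p i = t - 1) ∧ ∀ i j, G.Adj i j → p i ⬝ᵥ p j = -1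

/-- The strict vector chromatic number. -/
def strictVecChrom [Fintype V] (G : SimpleGraph V) : ℝ :=
  sInf {t : ℝ | 1 ≤ t ∧ ∃ (d : ℕ) (p : V → Fin d → ℝ), IsStrictVecColoring G t p}

/-- The Gram matrix of a family of vectors. -/
def gramMat {d : ℕ} (p : V → Fin d → ℝ) : Matrix V V ℝ :=
  Matrix.of fun i j => p i ⬝ᵥ p j

/-- `M` is the Gram matrix of an optimal vector coloring of `G`. -/
def IsOptGram [Fintype V] (G : SimpleGraph V) (M : Matrix V V ℝ) : Prop :=
  ∃ (d : ℕ) (p : V → Fin d → ℝ), IsVecColoring G (vecChrom G) p ∧ M = gramMat p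

/-- `grk G = rk(G)`: the maximum rank of the Gram matrix of an optimal vector coloring. -/
def grk [Fintype V] (G : SimpleGraph V) : ℕ :=
  sSup {r : ℕ | ∃ M : Matrix V V ℝ, IsOptGram G M ∧ M.rank = r}

/-- The categorical (tensor) product of graphs. -/
def catProd (G : SimpleGraph α) (H : SimpleGraph β) : SimpleGraph (α × β) where
  Adj x y := G.Adj x.1 y.1 ∧ H.Adj x.2 y.2
  symm := by constructor; intro x y hxy; exact ⟨hxy.1.symm, hxy.2.symm⟩
  loopless := by constructor; intro x hx; exact G.loopless.irrefl x.1 hx.1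

/-- A feasible dual solution for `vecChrom G`. -/
def IsDualSol [Fintype V] (G : SimpleGraph V) (B : Matrix V V ℝ) : Prop :=
  B.PosSemidef ∧ (∀ i j, i ≠ j → ¬ G.Adj i j → B i j = 0) ∧
    (∀ i j, 0 ≤ B i j) ∧ B.trace = 1

/-- An optimal dual solution for `vecChrom G`: feasible with objective value `vecChrom G`. -/
def IsOptDual [Fintype V] (G : SimpleGraph V) (B : Matrix V V ℝ) : Prop :=
  IsDualSol G B ∧ (∑ i, ∑ j, B i j) = vecChrom G

/-- The all-ones matrix `J`. -/
def allOnes (γ : Type*) : Matrix γ γ ℝ :=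
  Matrix.of fun _ _ => 1

/-- The graph `G(B)` of a (symmetric) matrix `B`: distinct `i, j` adjacent iff `B i j ≠ 0`. -/
def matGraph (B : Matrix V V ℝ) : SimpleGraph V where
  Adj i j := i ≠ j ∧ B i j ≠ 0 ∧ B j i ≠ 0
  symm := by constructor; intro i j hij; exact ⟨hij.1.symm, hij.2.2, hij.2.1⟩
  loopless := by constructor; intro i hi; exact hi.1 rfl

/-- The spanning subgraph `G^p` of edges tight in the vector coloring `p`. -/
def tightSub [Fintype V] (G : SimpleGraph V) {d : ℕ} (p : V → Fin d → ℝ) :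
    SimpleGraph V where
  Adj i j := G.Adj i j ∧ p i ⬝ᵥ p j = -1
  symm := by
    constructor
    intro i j hij
    exact ⟨hij.1.symm, by rw [dotProduct_comm]; exact hij.2⟩
  loopless := by constructor; intro i hi; exact G.loopless.irrefl i hi.1

/-- The skeleton `G^sk`: the spanning subgraph of edges tight in every optimal
vector coloring. -/
def skeleton [Fintype V] (G : SimpleGraph V) : SimpleGraph V where
  Adj i j := G.Adj i j ∧ ∀ (d : ℕ) (p : V → Fin d → ℝ),
      IsVecColoring G (vecChrom G) p → p i ⬝ᵥ p j = -1
  symm := by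
    constructor
    intro i j hij
    refine ⟨hij.1.symm, fun d p hp => ?_⟩
    rw [dotProduct_comm]
    exact hij.2 d p hp
  loopless := by constructor; intro i hi; exact G.loopless.irrefl i hi.1

/-- `i` is neighborly in the vector coloring `p`: `-p i` lies in the conical hull of
the vectors of the `∼_p`-neighbours of `i`. -/
def NeighborlyIn [Fintype V] (G : SimpleGraph V) {d : ℕ} (p : V → Fin d → ℝ)
    (i : V) : Prop :=
  ∃ c : V → ℝ, (∀ j, 0 ≤ c j) ∧ (∀ j, c j ≠ 0 → G.Adj i j ∧ p i ⬝ᵥ p j = -1) ∧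
    -p i = ∑ j, c j • p j

/-- `i` is neighborly: neighborly in every optimal vector coloring. -/
def Neighborly [Fintype V] (G : SimpleGraph V) (i : V) : Prop :=
  ∀ (d : ℕ) (p : V → Fin d → ℝ), IsVecColoring G (vecChrom G) p → NeighborlyIn G p i

/-- `i →_p j`: `-p i = ∑ α_l • p l` over `∼_p`-neighbours `l` of `i`, with `α_j > 0`. -/
def ArrowIn [Fintype V] (G : SimpleGraph V) {d : ℕ} (p : V → Fin d → ℝ)
    (i j : V) : Prop :=
  ∃ c : V → ℝ, (∀ l, 0 ≤ c l) ∧ (∀ l, c l ≠ 0 → G.Adj i l ∧ p i ⬝ᵥ p l = -1) ∧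
    0 < c j ∧ -p i = ∑ l, c l • p l

/-- `μ` is an eigenvalue of `M`. -/
def IsEigenvalue [Fintype V] (M : Matrix V V ℝ) (μ : ℝ) : Prop :=
  ∃ v : V → ℝ, v ≠ 0 ∧ M *ᵥ v = μ • v

/-- `lam` is the largest eigenvalue of `M`. -/
def IsMaxEigenvalue [Fintype V] (M : Matrix V V ℝ) (lam : ℝ) : Prop :=
  IsGreatest {μ : ℝ | IsEigenvalue M μ} lam

/-- `lam` is the smallest eigenvalue of `M`. -/
def IsMinEigenvalue [Fintype V] (M : Matrix V V ℝ) (lam : ℝ) : Prop :=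
  IsLeast {μ : ℝ | IsEigenvalue M μ} lam

/-- The eigenspace of `M` for `μ`. -/
def eigSpace [Fintype V] (M : Matrix V V ℝ) (μ : ℝ) : Submodule ℝ (V → ℝ) :=
  LinearMap.ker (M.mulVecLin - μ • (LinearMap.id : (V → ℝ) →ₗ[ℝ] V → ℝ))

/-- `W` is (the Gram matrix of) a convex combination of vector colorings of `G × H`
induced by `G` and by `H`: `W = a • (M ⊗ J) + b • (J ⊗ N)`. -/
def IsConvexCombInduced [Fintype α] [Fintype β] (G : SimpleGraph α) (H : SimpleGraph β)
    (W : Matrix (α × β) (α × β) ℝ) : Prop :=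
  ∃ (a b : ℝ) (M : Matrix α α ℝ) (N : Matrix β β ℝ),
    0 ≤ a ∧ 0 ≤ b ∧ a + b = 1 ∧ IsOptGram G M ∧ IsOptGram H N ∧
    W = a • (M ⊗ₖ allOnes β) + b • (allOnes α ⊗ₖ N)

/-! ### Auxiliary lemmas -/

section Aux

variable [Fintype V]

lemma dot_self_nonneg {d : ℕ} (v : Fin d → ℝ) : 0 ≤ v ⬝ᵥ v :=
  Finset.sum_nonneg fun i _ => mul_self_nonneg _

lemma dot_append {m n : ℕ} (u v : Fin m → ℝ) (w x : Fin n → ℝ) :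
    Fin.append u w ⬝ᵥ Fin.append v x = u ⬝ᵥ v + w ⬝ᵥ x := by
  simp only [dotProduct, Fin.sum_univ_add, Fin.append_left, Fin.append_right]

lemma abs_dot_le {d : ℕ} {p q : Fin d → ℝ} {s : ℝ} (hp : p ⬝ᵥ p = s) (hq : q ⬝ᵥ q = s) :
    |p ⬝ᵥ q| ≤ s := by
  have h1 : 0 ≤ (p + q) ⬝ᵥ (p + q) := dot_self_nonneg _
  have h2 : 0 ≤ (p - q) ⬝ᵥ (p - q) := dot_self_nonneg _
  rw [add_dotProduct, dotProduct_add, dotProduct_add,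
    dotProduct_comm q p, hp, hq] at h1
  rw [sub_dotProduct, dotProduct_sub, dotProduct_sub,
    dotProduct_comm q p, hp, hq] at h2
  rw [abs_le]; constructor <;> linarith

/-- The set of feasible values for the vector chromatic number. -/
def colSet (G : SimpleGraph V) : Set ℝ :=
  {t : ℝ | 1 ≤ t ∧ ∃ (d : ℕ) (p : V → Fin d → ℝ), IsVecColoring G t p}

lemma vecChrom_def (G : SimpleGraph V) : vecChrom G = sInf (colSet G) := rfl

lemma colSet_bddBelow (G : SimpleGraph V) : BddBelow (colSet G) :=
  ⟨1, fun _ ht => ht.1⟩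

lemma sum_chi {n : ℕ} (a : Fin n) : (∑ k, (if k = a then (1:ℝ) else 0)) = 1 := by simp

lemma sum_chi_chi {n : ℕ} (a b : Fin n) :
    (∑ k, (if k = a then (1:ℝ) else 0) * (if k = b then (1:ℝ) else 0))
      = if a = b then 1 else 0 := by
  simp only [ite_mul, one_mul, zero_mul]
  rw [Finset.sum_ite_eq' Finset.univ a (fun k => if k = b then (1:ℝ) else 0)]
  simp [eq_comm]

lemma card_mem_colSet (G : SimpleGraph V) [Nonempty V] :
    (Fintype.card V : ℝ) ∈ colSet G := by
  classical
  set n := Fintype.card V with hn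
  have hn0 : 0 < n := Fintype.card_pos
  have hn0' : (0:ℝ) < n := by exact_mod_cast hn0
  refine ⟨by exact_mod_cast hn0, n, fun i k =>
    ((n : ℝ) * (if k = Fintype.equivFin V i then 1 else 0) - 1) / Real.sqrt n, ?_⟩
  set ι := Fintype.equivFin V
  have key : ∀ i j : V,
      (fun k => ((n : ℝ) * (if k = ι i then 1 else 0) - 1) / Real.sqrt n) ⬝ᵥ
      (fun k => ((n : ℝ) * (if k = ι j then 1 else 0) - 1) / Real.sqrt n)
      = if i = j then (n : ℝ) - 1 else -1 := by
    intro i j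
    have hsq : Real.sqrt n * Real.sqrt n = n := Real.mul_self_sqrt hn0'.le
    have : ∀ k, ((n : ℝ) * (if k = ι i then 1 else 0) - 1) / Real.sqrt n *
        (((n : ℝ) * (if k = ι j then 1 else 0) - 1) / Real.sqrt n)
        = ((n:ℝ)^2 * ((if k = ι i then (1:ℝ) else 0) * (if k = ι j then (1:ℝ) else 0))
            - (n:ℝ) * (if k = ι i then (1:ℝ) else 0)
            - (n:ℝ) * (if k = ι j then (1:ℝ) else 0) + 1) / (n:ℝ) := by
      intro k
      rw [div_mul_div_comm, hsq]
      ring_nf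
    rw [dotProduct]
    rw [Finset.sum_congr rfl fun k _ => this k, ← Finset.sum_div]
    rw [Finset.sum_add_distrib, Finset.sum_sub_distrib, Finset.sum_sub_distrib,
      ← Finset.mul_sum, ← Finset.mul_sum, ← Finset.mul_sum, sum_chi, sum_chi, sum_chi_chi]
    have hcard : ∑ _k : Fin n, (1:ℝ) = n := by simp
    rw [hcard]
    by_cases hij : i = j
    · rw [if_pos (by rw [hij]), if_pos hij]
      field_simp
      ring
    · rw [if_neg (fun hh => hij (ι.injective hh)), if_neg hij]
      field_simp
      ring
  constructor
  · intro i; rw [key]; simp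
  · intro i j hadj; rw [key]; simp [hadj.ne]

lemma colSet_nonempty (G : SimpleGraph V) [Nonempty V] : (colSet G).Nonempty :=
  ⟨_, card_mem_colSet G⟩

lemma one_le_vecChrom (G : SimpleGraph V) [Nonempty V] : 1 ≤ vecChrom G :=
  le_csInf (colSet_nonempty G) fun _ ht => ht.1

lemma colSet_upward {G : SimpleGraph V} {s t : ℝ} (hs : s ∈ colSet G) (hst : s ≤ t) :
    t ∈ colSet G := by
  obtain ⟨hs1, d, p, hdiag, hedge⟩ := hs
  have ht1 : 1 ≤ t := le_trans hs1 hst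
  rcases eq_or_lt_of_le hs1 with heq | hlt
  · -- s = 1 : all vectors are zero, so G has no edges
    have hzero : ∀ i, p i = 0 := by
      intro i
      have := hdiag i
      rw [← heq] at this
      simpa using dotProduct_self_eq_zero.mp (by rw [this]; ring)
    have hnoadj : ∀ i j, ¬ G.Adj i j := by
      intro i j hadj
      have := hedge i j hadj
      rw [hzero i] at this
      simp [zero_dotProduct] at this
      linarith
    refine ⟨ht1, 1, fun _ _ => Real.sqrt (t - 1), ?_, ?_⟩
    · intro i
      simp [dotProduct, Real.mul_self_sqrt (by linarith : (0:ℝ) ≤ t - 1)]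
    · intro i j hadj; exact absurd hadj (hnoadj i j)
  · -- s > 1 : scale
    set c := Real.sqrt ((t - 1) / (s - 1)) with hc
    have hs1' : (0:ℝ) < s - 1 := by linarith
    have hfrac : 1 ≤ (t - 1) / (s - 1) := (one_le_div hs1').mpr (by linarith)
    have hc2 : c * c = (t - 1) / (s - 1) := Real.mul_self_sqrt (by linarith)
    have hc2' : 1 ≤ c * c := by rw [hc2]; exact hfrac
    refine ⟨ht1, d, fun i => c • p i, ?_, ?_⟩
    · intro i
      rw [smul_dotProduct, dotProduct_smul, smul_eq_mul, smul_eq_mul,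
        hdiag i, ← mul_assoc, hc2]
      field_simp
    · intro i j hadj
      rw [smul_dotProduct, dotProduct_smul, smul_eq_mul, smul_eq_mul,
        ← mul_assoc]
      have := hedge i j hadj
      nlinarith

lemma gram_quad {d : ℕ} (p : V → Fin d → ℝ) (x : V → ℝ) :
    0 ≤ ∑ i, ∑ j, x i * ((p i ⬝ᵥ p j) * x j) := by
  have key : ∑ k, (∑ i, x i * p i k) ^ 2 = ∑ i, ∑ j, x i * ((p i ⬝ᵥ p j) * x j) := by
    have h1 : ∀ k, (∑ i, x i * p i k) ^ 2
        = ∑ i, ∑ j, (x i * p i k) * (x j * p j k) := by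
      intro k; rw [sq, Finset.sum_mul_sum]
    rw [Finset.sum_congr rfl fun k _ => h1 k, Finset.sum_comm]
    refine Finset.sum_congr rfl fun i _ => ?_
    rw [Finset.sum_comm]
    refine Finset.sum_congr rfl fun j _ => ?_
    have h2 : ∀ k, (x i * p i k) * (x j * p j k) = x i * (p i k * p j k * x j) :=
      fun k => by ring
    rw [Finset.sum_congr rfl fun k _ => h2 k, ← Finset.mul_sum, ← Finset.sum_mul]
    rfl
  rw [← key]
  exact Finset.sum_nonneg fun k _ => sq_nonneg _

lemma vecChrom_mem (G : SimpleGraph V) [Nonempty V] :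
    ∃ (d : ℕ) (p : V → Fin d → ℝ), IsVecColoring G (vecChrom G) p := by
  classical
  set t := vecChrom G with htdef
  have hne := colSet_nonempty G
  have ht1 : 1 ≤ t := one_le_vecChrom G
  have htn : ∀ n : ℕ, t + 1/((n:ℝ)+1) ∈ colSet G := by
    intro n
    have hpos : (0:ℝ) < 1/((n:ℝ)+1) := by positivity
    have hinf : sInf (colSet G) = t := (vecChrom_def G).symm
    obtain ⟨s, hsS, hst⟩ := exists_lt_of_csInf_lt hne
      (by rw [hinf]; linarith : sInf (colSet G) < t + 1/((n:ℝ)+1))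
    exact colSet_upward hsS hst.le
  choose h1 d p hp using htn
  set f : ℕ → (V × V → ℝ) := fun n e => p n e.1 ⬝ᵥ p n e.2 with hf
  have hbound : ∀ n, f n ∈ Metric.closedBall (0 : V × V → ℝ) t := by
    intro n
    rw [mem_closedBall_zero_iff, pi_norm_le_iff_of_nonneg (by linarith : (0:ℝ) ≤ t)]
    intro e
    rw [Real.norm_eq_abs]
    have habs := abs_dot_le ((hp n).1 e.1) ((hp n).1 e.2)
    have hle : t + 1/((n:ℝ)+1) - 1 ≤ t := by
      have h2 : 1/((n:ℝ)+1) ≤ 1 := by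
        rw [div_le_one (by positivity)]
        linarith [Nat.cast_nonneg (α := ℝ) n]
      linarith
    exact le_trans habs hle
  obtain ⟨g, hg, φ, hφ, htends⟩ :=
    (isCompact_closedBall (0 : V × V → ℝ) t).tendsto_subseq hbound
  have hent : ∀ e, Filter.Tendsto (fun n => f (φ n) e) Filter.atTop (nhds (g e)) :=
    fun e => (tendsto_pi_nhds.mp htends) e
  have htt : Filter.Tendsto (fun n : ℕ => t + 1/((n:ℝ)+1)) Filter.atTop (nhds t) := by
    have h0 := tendsto_one_div_add_atTop_nhds_zero_nat (𝕜 := ℝ)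
    simpa using (tendsto_const_nhds (x := t) (f := Filter.atTop (α := ℕ))).add h0
  have httφ : Filter.Tendsto (fun n : ℕ => t + 1/((φ n : ℝ)+1)) Filter.atTop (nhds t) :=
    htt.comp hφ.tendsto_atTop
  have hdiag : ∀ i, g (i, i) = t - 1 := by
    intro i
    refine tendsto_nhds_unique (hent (i, i)) ?_
    have heq : (fun n => f (φ n) (i, i)) = fun n => t + 1/((φ n : ℝ)+1) - 1 := by
      funext n; exact (hp (φ n)).1 i
    rw [heq]
    simpa using httφ.sub (tendsto_const_nhds (x := (1:ℝ)))
  have hedge : ∀ i j, G.Adj i j → g (i, j) ≤ -1 := fun i j hadj =>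
    le_of_tendsto (hent (i, j))
      (Filter.Eventually.of_forall fun n => (hp (φ n)).2 i j hadj)
  have hsymm : ∀ i j, g (i, j) = g (j, i) := by
    intro i j
    refine tendsto_nhds_unique (hent (i, j)) ?_
    have heq : (fun n => f (φ n) (i, j)) = fun n => f (φ n) (j, i) := by
      funext n; exact dotProduct_comm _ _
    rw [heq]
    exact hent (j, i)
  set M : Matrix V V ℝ := Matrix.of fun i j => g (i, j) with hM
  have hpsd : M.PosSemidef := by
    rw [Matrix.posSemidef_iff_dotProduct_mulVec]
    constructor
    · ext i j
      simp only [hM, Matrix.conjTranspose_apply, Matrix.of_apply, star_trivial]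
      exact hsymm j i
    · intro x
      have hx : star x = x := by funext i; exact star_trivial _
      rw [hx]
      have hQ : x ⬝ᵥ (M *ᵥ x) = ∑ i, ∑ j, x i * (g (i, j) * x j) := by
        simp only [dotProduct, Matrix.mulVec, Matrix.of_apply, hM]
        exact Finset.sum_congr rfl fun i _ => by rw [Finset.mul_sum]
      rw [hQ]
      have htq : Filter.Tendsto (fun n => ∑ i, ∑ j, x i * (f (φ n) (i, j) * x j))
          Filter.atTop (nhds (∑ i, ∑ j, x i * (g (i, j) * x j))) := by
        refine tendsto_finset_sum _ fun i _ => tendsto_finset_sum _ fun j _ => ?_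
        exact ((hent (i, j)).mul_const (x j)).const_mul (x i)
      refine ge_of_tendsto htq (Filter.Eventually.of_forall fun n => ?_)
      exact gram_quad (p (φ n)) x
  obtain ⟨B, hB⟩ : ∃ B : Matrix V V ℝ, M = Bᴴ * B := by
    open scoped MatrixOrder in
    exact CStarAlgebra.nonneg_iff_eq_star_mul_self.mp hpsd.nonneg
  set e : Fin (Fintype.card V) ≃ V := (Fintype.equivFin V).symm with he
  refine ⟨Fintype.card V, fun i k => B (e k) i, ?_, ?_⟩
  all_goals {
    have hdot : ∀ i j : V, (fun k => B (e k) i) ⬝ᵥ (fun k => B (e k) j) = g (i, j) := by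
      intro i j
      have hsum : (fun k => B (e k) i) ⬝ᵥ (fun k => B (e k) j) = ∑ v : V, B v i * B v j :=
        Fintype.sum_equiv e _ _ (fun k => rfl)
      have h2 : M i j = ∑ v, B v i * B v j := by
        rw [hB]
        simp [Matrix.mul_apply, Matrix.conjTranspose_apply]
      rw [hsum, ← h2]
      rfl
    first
    | exact fun i => by rw [hdot i i]; exact hdiag i
    | exact fun i j hadj => by rw [hdot i j]; exact hedge i j hadj
  }

lemma combine {G : SimpleGraph V} {t : ℝ} {d₁ d₂ : ℕ} {p : V → Fin d₁ → ℝ}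
    {q : V → Fin d₂ → ℝ} (hp : IsVecColoring G t p) (hq : IsVecColoring G t q) :
    ∃ r : V → Fin (d₁ + d₂) → ℝ, IsVecColoring G t r ∧
      ∀ i j, r i ⬝ᵥ r j = (p i ⬝ᵥ p j) / 2 + (q i ⬝ᵥ q j) / 2 := by
  set c := Real.sqrt (1/2) with hc
  have hc2 : c * c = 1/2 := Real.mul_self_sqrt (by norm_num)
  set r : V → Fin (d₁ + d₂) → ℝ := fun i => Fin.append (c • p i) (c • q i) with hr
  have hdot : ∀ i j, r i ⬝ᵥ r j = (p i ⬝ᵥ p j) / 2 + (q i ⬝ᵥ q j) / 2 := by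
    intro i j
    show Fin.append (c • p i) (c • q i) ⬝ᵥ Fin.append (c • p j) (c • q j) = _
    rw [dot_append, smul_dotProduct, dotProduct_smul,
      smul_dotProduct, dotProduct_smul, smul_eq_mul, smul_eq_mul,
      smul_eq_mul, smul_eq_mul, ← mul_assoc, ← mul_assoc, hc2]
    ring
  refine ⟨r, ⟨fun i => ?_, fun i j hadj => ?_⟩, hdot⟩
  · rw [hdot, hp.1 i, hq.1 i]; ring
  · have h1 := hp.2 i j hadj
    have h2 := hq.2 i j hadj
    rw [hdot]; linarith

lemma exists_opt_coloring_slack (G : SimpleGraph V) [Nonempty V] :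
    ∃ (d : ℕ) (p : V → Fin d → ℝ), IsVecColoring G (vecChrom G) p ∧
      ∀ i j, G.Adj i j → ¬ (skeleton G).Adj i j → p i ⬝ᵥ p j < -1 := by
  classical
  suffices h : ∀ s : Finset (V × V), ∃ (d : ℕ) (p : V → Fin d → ℝ),
      IsVecColoring G (vecChrom G) p ∧
      ∀ e ∈ s, G.Adj e.1 e.2 → ¬ (skeleton G).Adj e.1 e.2 → p e.1 ⬝ᵥ p e.2 < -1 by
    obtain ⟨d, p, h1, h2⟩ := h Finset.univ
    exact ⟨d, p, h1, fun i j => h2 (i, j) (Finset.mem_univ _)⟩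
  intro s
  induction s using Finset.induction_on with
  | empty =>
    obtain ⟨d, p, h⟩ := vecChrom_mem G
    exact ⟨d, p, h, fun e he => absurd he (Finset.notMem_empty e)⟩
  | @insert e s he ih =>
    obtain ⟨d, p, hp, hps⟩ := ih
    by_cases hcase : G.Adj e.1 e.2 ∧ ¬ (skeleton G).Adj e.1 e.2
    · have hnot : ¬ ∀ (d' : ℕ) (q : V → Fin d' → ℝ),
          IsVecColoring G (vecChrom G) q → q e.1 ⬝ᵥ q e.2 = -1 := by
        intro hall
        exact hcase.2 ⟨hcase.1, hall⟩
      push_neg at hnot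
      obtain ⟨d', q, hq, hqe⟩ := hnot
      have hqlt : q e.1 ⬝ᵥ q e.2 < -1 := lt_of_le_of_ne (hq.2 _ _ hcase.1) hqe
      obtain ⟨r, hrc, hrd⟩ := combine hp hq
      refine ⟨_, r, hrc, ?_⟩
      intro e' he' hadj hskel
      rw [Finset.mem_insert] at he'
      rcases he' with rfl | he'
      · rw [hrd]
        have h4 := hp.2 _ _ hadj
        linarith
      · rw [hrd]
        have h3 := hps e' he' hadj hskel
        have h4 := hq.2 _ _ hadj
        linarith
    · refine ⟨d, p, hp, ?_⟩
      intro e' he' hadj hskel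
      rw [Finset.mem_insert] at he'
      rcases he' with rfl | he'
      · exact absurd ⟨hadj, hskel⟩ hcase
      · exact hps e' he' hadj hskel

lemma prod_coloring [Fintype α] [Fintype β] {G : SimpleGraph α} {H : SimpleGraph β} {t : ℝ}
    {d₁ d₂ : ℕ} {p : α → Fin d₁ → ℝ} {q : β → Fin d₂ → ℝ}
    (hpd : ∀ i, p i ⬝ᵥ p i = t - 1) (hqd : ∀ ℓ, q ℓ ⬝ᵥ q ℓ = t - 1)
    (x y : α × β → ℝ) (hxy : ∀ u, x u * x u + y u * y u = 1)
    (hedge : ∀ u v, (catProd G H).Adj u v →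
      x u * x v * (p u.1 ⬝ᵥ p v.1) + y u * y v * (q u.2 ⬝ᵥ q v.2) ≤ -1) :
    ∃ r : α × β → Fin (d₁ + d₂) → ℝ, IsVecColoring (catProd G H) t r ∧
      ∀ u v, r u ⬝ᵥ r v
        = x u * x v * (p u.1 ⬝ᵥ p v.1) + y u * y v * (q u.2 ⬝ᵥ q v.2) := by
  set r : α × β → Fin (d₁ + d₂) → ℝ := fun u => Fin.append (x u • p u.1) (y u • q u.2)
    with hr
  have hdot : ∀ u v, r u ⬝ᵥ r v
      = x u * x v * (p u.1 ⬝ᵥ p v.1) + y u * y v * (q u.2 ⬝ᵥ q v.2) := by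
    intro u v
    show Fin.append (x u • p u.1) (y u • q u.2) ⬝ᵥ
      Fin.append (x v • p v.1) (y v • q v.2) = _
    rw [dot_append, smul_dotProduct, dotProduct_smul,
      smul_dotProduct, dotProduct_smul, smul_eq_mul, smul_eq_mul,
      smul_eq_mul, smul_eq_mul]
    ring
  refine ⟨r, ⟨fun u => ?_, fun u v huv => by rw [hdot]; exact hedge u v huv⟩, hdot⟩
  rw [hdot, hpd, hqd]
  linear_combination (t - 1) * hxy u

lemma vecChrom_catProd [Fintype α] [Fintype β] (G : SimpleGraph α) (H : SimpleGraph β)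
    [Nonempty α] [Nonempty β]
    (h : vecChrom G = vecChrom H)
    (hcc : ∀ W : Matrix (α × β) (α × β) ℝ, IsOptGram (catProd G H) W →
      IsConvexCombInduced G H W) :
    vecChrom (catProd G H) = vecChrom G := by
  obtain ⟨d, r, hr⟩ := vecChrom_mem (catProd G H)
  obtain ⟨a, b, M, N, ha, hb, hab, ⟨dM, pM, hpM, hMeq⟩, ⟨dN, qN, hqN, hNeq⟩, hW⟩ :=
    hcc (gramMat r) ⟨d, r, hr, rfl⟩
  obtain ⟨i0⟩ := ‹Nonempty α›
  obtain ⟨l0⟩ := ‹Nonempty β›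
  have hent : gramMat r (i0, l0) (i0, l0)
      = (a • (M ⊗ₖ allOnes β) + b • (allOnes α ⊗ₖ N)) (i0, l0) (i0, l0) := by rw [← hW]
  have h1 : gramMat r (i0, l0) (i0, l0) = vecChrom (catProd G H) - 1 := hr.1 _
  have h2 : M i0 i0 = vecChrom G - 1 := by rw [hMeq]; exact hpM.1 i0
  have h3 : N l0 l0 = vecChrom H - 1 := by rw [hNeq]; exact hqN.1 l0
  rw [h1] at hent
  simp only [Matrix.add_apply, Matrix.smul_apply, Matrix.kroneckerMap_apply, allOnes,
    Matrix.of_apply, smul_eq_mul] at hent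
  rw [h2, h3, ← h] at hent
  linear_combination hent + (vecChrom G - 1) * hab

lemma colSet_catProd_le {γ δ : Type*} [Fintype γ] [Fintype δ] (G' : SimpleGraph γ)
    (H' : SimpleGraph δ) (t : ℝ) :
    t ∈ colSet (catProd G' H') → t ∈ colSet (catProd H' G') := by
  rintro ⟨ht1, d, r, hrd, hre⟩
  exact ⟨ht1, d, fun u => r (u.2, u.1), fun u => hrd _,
    fun u v huv => hre _ _ ⟨huv.2, huv.1⟩⟩

lemma colSet_catProd_comm [Fintype α] [Fintype β] (G : SimpleGraph α) (H : SimpleGraph β) :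
    colSet (catProd G H) = colSet (catProd H G) := by
  ext t
  exact ⟨colSet_catProd_le G H t, colSet_catProd_le H G t⟩

lemma vecChrom_catProd_comm [Fintype α] [Fintype β] (G : SimpleGraph α)
    (H : SimpleGraph β) : vecChrom (catProd G H) = vecChrom (catProd H G) := by
  rw [vecChrom_def, vecChrom_def, colSet_catProd_comm]

lemma hcc_flip [Fintype α] [Fintype β] {G : SimpleGraph α} {H : SimpleGraph β}
    (hcc : ∀ W : Matrix (α × β) (α × β) ℝ, IsOptGram (catProd G H) W →
      IsConvexCombInduced G H W) :
    ∀ W : Matrix (β × α) (β × α) ℝ, IsOptGram (catProd H G) W →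
      IsConvexCombInduced H G W := by
  rintro W ⟨d, r, hr, hWg⟩
  set r' : α × β → Fin d → ℝ := fun u => r (u.2, u.1) with hr'
  have hcol : IsVecColoring (catProd G H) (vecChrom (catProd G H)) r' := by
    refine ⟨fun u => ?_, fun u v huv => hr.2 _ _ ⟨huv.2, huv.1⟩⟩
    rw [vecChrom_catProd_comm G H]
    exact hr.1 _
  obtain ⟨a, b, M, N, ha, hb, hab, hM, hN, hWeq⟩ := hcc (gramMat r') ⟨d, r', hcol, rfl⟩
  refine ⟨b, a, N, M, hb, ha, by linarith, hN, hM, ?_⟩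
  refine Matrix.ext ?_
  rintro ⟨l, i⟩ ⟨k, j⟩
  have h1 : gramMat r' (i, l) (j, k)
      = (a • (M ⊗ₖ allOnes β) + b • (allOnes α ⊗ₖ N)) (i, l) (j, k) := by rw [← hWeq]
  have h2 : W (l, i) (k, j) = gramMat r' (i, l) (j, k) := by rw [hWg]; rfl
  rw [h2, h1]
  simp only [Matrix.add_apply, Matrix.smul_apply, Matrix.kroneckerMap_apply, allOnes,
    Matrix.of_apply, smul_eq_mul]
  ring

set_option maxHeartbeats 1000000 in
lemma skel_conn_left [Fintype α] [Fintype β] (G : SimpleGraph α) (H : SimpleGraph β)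
    (hG : ∃ a b, G.Adj a b) (hH : ∃ a b, H.Adj a b)
    (h : vecChrom G = vecChrom H)
    (hcc : ∀ W : Matrix (α × β) (α × β) ℝ, IsOptGram (catProd G H) W →
      IsConvexCombInduced G H W) :
    (skeleton G).Connected := by
  classical
  obtain ⟨a0, b0, hab0⟩ := hG
  obtain ⟨l0, k0, hlk0⟩ := hH
  haveI : Nonempty α := ⟨a0⟩
  haveI : Nonempty β := ⟨l0⟩
  rw [SimpleGraph.connected_iff]
  refine ⟨?_, inferInstance⟩
  by_contra hpc
  simp only [SimpleGraph.Preconnected, not_forall] at hpc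
  obtain ⟨u, v, huv⟩ := hpc
  set A : Set α := {w | (skeleton G).Reachable u w} with hA
  have hu : u ∈ A := SimpleGraph.Reachable.refl u
  have hv : v ∉ A := huv
  have hcutAdj : ∀ i j, i ∈ A → (skeleton G).Adj i j → j ∈ A := by
    intro i j hi hij
    exact SimpleGraph.Reachable.trans hi hij.reachable
  set t := vecChrom G with ht
  have htprod : vecChrom (catProd G H) = t := vecChrom_catProd G H h hcc
  obtain ⟨d₁, p, hp, hpslack⟩ := exists_opt_coloring_slack G
  obtain ⟨d₂, q, hq0⟩ := vecChrom_mem H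
  have hq : IsVecColoring H t q := by rw [h]; exact hq0
  have ht0 : 0 ≤ t - 1 := by rw [← hp.1 a0]; exact dot_self_nonneg _
  -- crossing edges are slack by at least ε
  set F : Finset (α × α) :=
    Finset.univ.filter (fun e => e.1 ∈ A ∧ e.2 ∉ A ∧ G.Adj e.1 e.2) with hF
  set ε : ℝ :=
    if hFne : F.Nonempty then F.inf' hFne (fun e => -1 - p e.1 ⬝ᵥ p e.2) else 1 with hε
  have hslackF : ∀ e ∈ F, 0 < -1 - p e.1 ⬝ᵥ p e.2 := by
    intro e heF
    rw [hF, Finset.mem_filter] at heF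
    obtain ⟨-, h1, h2, h3⟩ := heF
    have hnskel : ¬ (skeleton G).Adj e.1 e.2 := fun hsk => h2 (hcutAdj _ _ h1 hsk)
    have := hpslack _ _ h3 hnskel
    linarith
  have hεpos : 0 < ε := by
    rw [hε]
    split
    · next hFne => exact (Finset.lt_inf'_iff hFne).mpr fun e heF => hslackF e heF
    · norm_num
  have hcross : ∀ i j, i ∈ A → j ∉ A → G.Adj i j → p i ⬝ᵥ p j ≤ -1 - ε := by
    intro i j hi hj hij
    have hmem : (i, j) ∈ F := by rw [hF, Finset.mem_filter]; exact ⟨Finset.mem_univ _, hi, hj, hij⟩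
    have hFne : F.Nonempty := ⟨_, hmem⟩
    rw [hε, dif_pos hFne]
    have := Finset.inf'_le (fun e => -1 - p e.1 ⬝ᵥ p e.2) hmem
    linarith
  set δ : ℝ := min (ε/2) (1/4) with hδ
  have hδpos : 0 < δ := lt_min (by linarith) (by norm_num)
  have hδ1 : δ ≤ ε/2 := min_le_left _ _
  have hδ2 : δ ≤ 1/4 := min_le_right _ _
  -- the weights
  set xa : ℝ := Real.sqrt (1/2) with hxa
  set xo : ℝ := Real.sqrt (1/2 + δ) with hxo
  set yo : ℝ := Real.sqrt (1/2 - δ) with hyo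
  have h12d : (0:ℝ) ≤ 1/2 + δ := by linarith
  have h12d' : (0:ℝ) ≤ 1/2 - δ := by linarith
  have hxa2 : xa * xa = 1/2 := Real.mul_self_sqrt (by norm_num)
  have hxo2 : xo * xo = 1/2 + δ := Real.mul_self_sqrt h12d
  have hyo2 : yo * yo = 1/2 - δ := Real.mul_self_sqrt h12d'
  have hxa0 : 0 ≤ xa := Real.sqrt_nonneg _
  have hxo0 : 0 ≤ xo := Real.sqrt_nonneg _
  have hyo0 : 0 ≤ yo := Real.sqrt_nonneg _
  have hc1 : 1/2 ≤ xa * xo := by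
    rw [hxa, hxo, ← Real.sqrt_mul (by norm_num : (0:ℝ) ≤ 1/2)]
    rw [Real.le_sqrt (by norm_num) (by nlinarith)]
    nlinarith
  have hc2 : 1/2 - δ ≤ xa * yo := by
    rw [hxa, hyo, ← Real.sqrt_mul (by norm_num : (0:ℝ) ≤ 1/2)]
    rw [Real.le_sqrt (by linarith) (by nlinarith)]
    nlinarith
  -- crossing edge key inequality
  have hkey : ∀ P Q : ℝ, P ≤ -1 - ε → Q ≤ -1 → xa * xo * P + xa * yo * Q ≤ -1 := by
    intro P Q hP hQ
    have e1 : xa * xo * P ≤ xa * xo * (-1 - ε) :=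
      mul_le_mul_of_nonneg_left hP (mul_nonneg hxa0 hxo0)
    have e2 : xa * xo * (-1 - ε) ≤ 1/2 * (-1 - ε) :=
      mul_le_mul_of_nonpos_right hc1 (by linarith)
    have e3 : xa * yo * Q ≤ xa * yo * (-1) :=
      mul_le_mul_of_nonneg_left hQ (mul_nonneg hxa0 hyo0)
    have e4 : xa * yo * (-1) ≤ (1/2 - δ) * (-1) :=
      mul_le_mul_of_nonpos_right hc2 (by norm_num)
    nlinarith
  set x : α × β → ℝ := fun w => if w.1 ∈ A then xa else xo with hx
  set y : α × β → ℝ := fun w => if w.1 ∈ A then xa else yo with hy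
  have hxyone : ∀ w, x w * x w + y w * y w = 1 := by
    intro w
    simp only [hx, hy]
    by_cases hw : w.1 ∈ A
    · rw [if_pos hw, if_pos hw, hxa2]; norm_num
    · rw [if_neg hw, if_neg hw, hxo2, hyo2]; ring
  have hedge : ∀ w z, (catProd G H).Adj w z →
      x w * x z * (p w.1 ⬝ᵥ p z.1) + y w * y z * (q w.2 ⬝ᵥ q z.2) ≤ -1 := by
    intro w z hwz
    obtain ⟨hGadj, hHadj⟩ := hwz
    have hP : p w.1 ⬝ᵥ p z.1 ≤ -1 := hp.2 _ _ hGadj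
    have hQ : q w.2 ⬝ᵥ q z.2 ≤ -1 := hq.2 _ _ hHadj
    simp only [hx, hy]
    by_cases hw : w.1 ∈ A <;> by_cases hz : z.1 ∈ A
    · rw [if_pos hw, if_pos hz, if_pos hw, if_pos hz, hxa2]
      linarith
    · rw [if_pos hw, if_neg hz, if_pos hw, if_neg hz]
      exact hkey _ _ (hcross _ _ hw hz hGadj) hQ
    · rw [if_neg hw, if_pos hz, if_neg hw, if_pos hz]
      have hP' : p z.1 ⬝ᵥ p w.1 ≤ -1 - ε := hcross _ _ hz hw hGadj.symm
      rw [dotProduct_comm] at hP'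
      calc xo * xa * (p w.1 ⬝ᵥ p z.1) + yo * xa * (q w.2 ⬝ᵥ q z.2)
          = xa * xo * (p w.1 ⬝ᵥ p z.1) + xa * yo * (q w.2 ⬝ᵥ q z.2) := by ring
        _ ≤ -1 := hkey _ _ hP' hQ
    · rw [if_neg hw, if_neg hz, if_neg hw, if_neg hz]
      have e1 : xo * xo * (p w.1 ⬝ᵥ p z.1) ≤ (1/2 + δ) * (-1) := by
        rw [hxo2]
        exact mul_le_mul_of_nonneg_left hP h12d
      have e2 : yo * yo * (q w.2 ⬝ᵥ q z.2) ≤ (1/2 - δ) * (-1) := by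
        rw [hyo2]
        exact mul_le_mul_of_nonneg_left hQ h12d'
      nlinarith
  -- build the optimal coloring of the product
  obtain ⟨r, hrcol, hrdot⟩ := prod_coloring (G := G) (H := H) hp.1 hq.1 x y hxyone hedge
  have hropt : IsVecColoring (catProd G H) (vecChrom (catProd G H)) r := by
    rw [htprod]; exact hrcol
  obtain ⟨a, b, M, N, ha, hb, hab, ⟨dM, pM, hpM, hMeq⟩, hNopt, hWeq⟩ :=
    hcc (gramMat r) ⟨_, r, hropt, rfl⟩
  -- evaluate entries
  have hMdiag : ∀ i, M i i = t - 1 := by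
    intro i
    rw [hMeq]
    exact hpM.1 i
  have entry : ∀ w z : α × β, r w ⬝ᵥ r z
      = a * (M w.1 z.1 * 1) + b * (1 * N w.2 z.2) := by
    intro w z
    have h1 : gramMat r w z
        = (a • (M ⊗ₖ allOnes β) + b • (allOnes α ⊗ₖ N)) w z := by rw [← hWeq]
    simp only [Matrix.add_apply, Matrix.smul_apply, Matrix.kroneckerMap_apply, allOnes,
      Matrix.of_apply, smul_eq_mul, gramMat] at h1
    exact h1
  set Q := q l0 ⬝ᵥ q k0 with hQdef
  have hQle : Q ≤ -1 := hq.2 _ _ hlk0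
  have E1 : 1/2 * (t - 1) + 1/2 * Q = a * (M u u * 1) + b * (1 * N l0 k0) := by
    have := entry (u, l0) (u, k0)
    rw [hrdot] at this
    simp only [hx, hy, if_pos hu] at this
    rw [hp.1 u] at this
    rw [← this, hxa2]
  have E2 : (1/2 + δ) * (t - 1) + (1/2 - δ) * Q = a * (M v v * 1) + b * (1 * N l0 k0) := by
    have := entry (v, l0) (v, k0)
    rw [hrdot] at this
    simp only [hx, hy, if_neg hv] at this
    rw [hp.1 v] at this
    rw [← this, hxo2, hyo2]
  rw [hMdiag u] at E1
  rw [hMdiag v] at E2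
  have hQeq : Q = t - 1 := by
    have hsub : δ * (t - 1) - δ * Q = 0 := by linarith
    have := hδpos
    nlinarith
  linarith

end Aux

end VectorColoring

/-- If `χ_v(G) = χ_v(H)`, both graphs have an edge, and every optimal
vector coloring of `G × H` is a convex combination of vector colorings induced by the
factors, then the skeletons `G^sk` and `H^sk` are connected. -/
theorem skeleton_connected_of_convex_comb {α β : Type*} [Fintype α] [Fintype β]
    (G : SimpleGraph α) (H : SimpleGraph β)
    (hG : ∃ a b, G.Adj a b) (hH : ∃ a b, H.Adj a b)
    (h : vecChrom G = vecChrom H)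
    (hcc : ∀ W : Matrix (α × β) (α × β) ℝ, IsOptGram (catProd G H) W →
      IsConvexCombInduced G H W) :
    (skeleton G).Connected ∧ (skeleton H).Connected :=
  ⟨skel_conn_left G H hG hH h hcc,
   skel_conn_left H G hH hG h.symm (hcc_flip hcc)⟩
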